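/- Let I = (b; a_1,...,a_n) be positive integers and d > 1. Define Γ(I,d) on n + 2d players as the intersection of the d weighted games [3b+1; 3a_1,...,3a_n, e^j] for j = 1,...,d, where e^j assigns weight 1 to the two extra players 2j−1 and 2j (among the 2d extra players) and 0 to the others. Then for X ⊆ {1,...,n} and Y ⊆ extra players: if Σ_{i∈X} a_i > b then X ∪ Y is winning in Γ(I,d); if Σ_{i∈X} a_i < b then X ∪ Y is losing; and if Σ_{i∈X} a_i = b then X ∪ Y is winning iff Y intersects every pair {2j−1, 2j}, j = 1,...,d. -/

import Mathlib

/-- Weight function of the `j`-th weighted game defining `Γ(I,d)`: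
players are `Fin n ⊕ (Fin d × Fin 2)` (the `n` subset-sum players plus `2d`
extra players grouped into `d` pairs). -/
def wt (n d : ℕ) (a : Fin n → ℕ) (j : Fin d) : Fin n ⊕ (Fin d × Fin 2) → ℕ :=
  fun p => match p with
  | Sum.inl i => 3 * a i
  | Sum.inr (k, _) => if k = j then 1 else 0

/-- The game `Γ(I,d)`: intersection of the `d` weighted games `[3b+1; 3a, e^j]`. -/
def GammaId (n d : ℕ) (a : Fin n → ℕ) (b : ℕ)
    (S : Finset (Fin n ⊕ (Fin d × Fin 2))) : Prop :=
  ∀ j : Fin d, 3 * b + 1 ≤ ∑ p ∈ S, wt n d a j p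

lemma sum_wt_disjSum (n d : ℕ) (a : Fin n → ℕ) (j : Fin d)
    (X : Finset (Fin n)) (Y : Finset (Fin d × Fin 2)) :
    ∑ p ∈ X.disjSum Y, wt n d a j p
      = 3 * (∑ i ∈ X, a i) + ∑ p ∈ Y, (if p.1 = j then 1 else 0) := by
  rw [Finset.sum_disjSum, Finset.mul_sum]
  rfl

lemma ysum_le (d : ℕ) (j : Fin d) (Y : Finset (Fin d × Fin 2)) :
    (∑ p ∈ Y, if p.1 = j then 1 else 0) ≤ 2 := by
  classical
  calc (∑ p ∈ Y, if p.1 = j then 1 else 0)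
      = (Y.filter (fun p => p.1 = j)).card := by
        rw [Finset.card_filter]
    _ ≤ (({j} : Finset (Fin d)) ×ˢ (Finset.univ : Finset (Fin 2))).card := by
        apply Finset.card_le_card
        intro p hp
        simp only [Finset.mem_filter] at hp
        exact Finset.mem_product.2 ⟨by simp [hp.2], Finset.mem_univ _⟩
    _ = 2 := by simp

/-- Key properties of `Γ(I,d)`: for a coalition `X ∪ Y` with `X` among the first
`n` players and `Y` among the extra players, winning is determined by comparing
`Σ_{i∈X} a_i` with `b`, with ties resolved by whether `Y` hits every pair. -/
theorem gammaId_cases (n d : ℕ) (a : Fin n → ℕ) (b : ℕ)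
    (ha : ∀ i, 0 < a i) (hb : 0 < b) (hd : 1 < d)
    (X : Finset (Fin n)) (Y : Finset (Fin d × Fin 2)) :
    ((b < ∑ i ∈ X, a i) → GammaId n d a b (X.disjSum Y)) ∧
    ((∑ i ∈ X, a i < b) → ¬ GammaId n d a b (X.disjSum Y)) ∧
    ((∑ i ∈ X, a i = b) →
      (GammaId n d a b (X.disjSum Y) ↔ ∀ j : Fin d, ∃ c : Fin 2, (j, c) ∈ Y)) := by
  classical
  refine ⟨?_, ?_, ?_⟩
  · intro h j
    rw [sum_wt_disjSum]
    have : b + 1 ≤ ∑ i ∈ X, a i := h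
    omega
  · intro h hg
    have hj := hg ⟨0, by omega⟩
    rw [sum_wt_disjSum] at hj
    have := ysum_le d ⟨0, by omega⟩ Y
    omega
  · intro h
    constructor
    · intro hg j
      have hj := hg j
      rw [sum_wt_disjSum, h] at hj
      have h1 : 1 ≤ ∑ p ∈ Y, (if p.1 = j then 1 else 0) := by omega
      by_contra hc
      push_neg at hc
      have : (∑ p ∈ Y, if p.1 = j then 1 else 0) = 0 := by
        apply Finset.sum_eq_zero
        intro p hp
        have : p.1 ≠ j := by
          intro he
          exact hc p.2 (by rw [← he]; exact hp)
        simp [this]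
      omega
    · intro hy j
      rw [sum_wt_disjSum, h]
      obtain ⟨c, hc⟩ := hy j
      have : 1 ≤ ∑ p ∈ Y, (if p.1 = j then 1 else 0) := by
        have := Finset.single_le_sum (f := fun p : Fin d × Fin 2 => if p.1 = j then 1 else 0)
          (fun p _ => Nat.zero_le _) hc
        simpa using this
      omega
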